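/- Let n ≥ 1, let Δ > 4 be an integer, and suppose F(2^{ℤⁿ}) is partitioned by a clopen equivalence relation E_Δ whose classes are n-dimensional rectangles with side lengths Δ or Δ+1. Let δ < Δ/2 − 1 be a positive integer and C_δ = {x ∈ F(2^{ℤⁿ}) : ρ(x, [x] \ [x]_E) > δ}, where [x]_E is the E_Δ-class of x. Let v = (ν₁, …, νₙ) ∈ ℤⁿ have all coordinates non-zero. If Δ > 2^{n+1}(δ+1)‖v‖, then for every x ∈ F(2^{ℤⁿ}) there is an integer a with |a| ≤ Δ/2 such that (a·v)·x ∈ C_δ. -/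

import Mathlib

/-- The space `2^{ℤⁿ}` with the product topology. -/
abbrev Space (n : ℕ) : Type := (Fin n → ℤ) → Bool

/-- The Bernoulli shift action: `(g · x)(h) = x(g + h)`. -/
def shift {n : ℕ} (g : Fin n → ℤ) (x : Space n) : Space n := fun h => x (g + h)

/-- The free part `F(2^{ℤⁿ})` of the shift action. -/
def FreePart (n : ℕ) : Set (Space n) := {x | ∀ g : Fin n → ℤ, g ≠ 0 → shift g x ≠ x}

/-- The sup norm on `ℤⁿ`, valued in `ℕ`. -/
def gnorm {n : ℕ} (g : Fin n → ℤ) : ℕ := Finset.univ.sup fun i => (g i).natAbs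

lemma shift_shift {n : ℕ} (g g' : Fin n → ℤ) (x : Space n) :
    shift g (shift g' x) = shift (g' + g) x := by
  funext h
  simp [shift, add_assoc]

lemma shift_zero {n : ℕ} (x : Space n) : shift 0 x = x := by
  funext h
  simp [shift]

lemma shift_mem_freePart {n : ℕ} {g : Fin n → ℤ} {x : Space n} (hx : x ∈ FreePart n) :
    shift g x ∈ FreePart n := by
  intro h hh hcontra
  apply hx h hh
  rw [shift_shift] at hcontra
  have h2 := congrArg (shift (-g)) hcontra
  rw [shift_shift, shift_shift] at h2
  have e1 : g + h + -g = h := by abel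
  have e2 : g + -g = 0 := by abel
  rw [e1, e2, shift_zero] at h2
  exact h2


/-- A generalized `n`-dimensional rectangle `[a₁,b₁] × ⋯ × [aₙ,bₙ]` in `ℤⁿ`. -/
def genRect {n : ℕ} (a b : Fin n → ℤ) : Set (Fin n → ℤ) := {x | ∀ i, a i ≤ x i ∧ x i ≤ b i}

lemma free_shift_inj {n : ℕ} {x : Space n} (hx : x ∈ FreePart n) {g g' : Fin n → ℤ}
    (h : shift g x = shift g' x) : g = g' := by
  by_contra hne
  have h2 := congrArg (shift (-g')) h
  rw [shift_shift, shift_shift] at h2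
  have e2 : g' + -g' = 0 := by abel
  rw [e2, shift_zero] at h2
  refine hx (g + -g') ?_ h2
  intro h0
  exact hne (by have := congrArg (· + g') h0; simpa using this)

theorem stmt12 (n : ℕ) (hn : 1 ≤ n) (Δ : ℤ) (hΔ : 4 < Δ)
    (E : FreePart n → FreePart n → Prop) (hEquiv : Equivalence E)
    (hclopen : IsClopen {p : FreePart n × FreePart n | E p.1 p.2})
    -- every `E`-class is an `n`-dimensional rectangle with side lengths `Δ` or `Δ+1`
    (hclass : ∀ x : FreePart n, ∃ a b : Fin n → ℤ,
      (∀ i, a i ≤ 0 ∧ 0 ≤ b i) ∧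
      (∀ i, b i - a i = Δ ∨ b i - a i = Δ + 1) ∧
      (∀ y : FreePart n, E x y ↔ ∃ g ∈ genRect a b, shift g (x : Space n) = (y : Space n)))
    (δ : ℤ) (hδpos : 0 < δ) (hδ : 2 * δ < Δ - 2)
    (v : Fin n → ℤ) (hv : ∀ i, v i ≠ 0)
    (hΔv : 2 ^ (n + 1) * (δ + 1) * (gnorm v : ℤ) < Δ) :
    ∀ x : FreePart n, ∃ a : ℤ, 2 * |a| ≤ Δ ∧
      -- `(a·v)·x` belongs to `C_δ`: every orbit point within distance `δ` of it
      -- lies in its `E`-class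
      (∀ g : Fin n → ℤ, (gnorm g : ℤ) ≤ δ →
        E ⟨shift (a • v) (x : Space n), shift_mem_freePart x.2⟩
          ⟨shift g (shift (a • v) (x : Space n)),
            shift_mem_freePart (shift_mem_freePart x.2)⟩) := by
  classical
  choose A B hA0 hside hiff using hclass
  intro x
  set K : ℤ := (gnorm v : ℤ) with hKdef
  have hK1 : 1 ≤ K := by
    have h1 : 1 ≤ (v ⟨0, hn⟩).natAbs := by
      have := hv ⟨0, hn⟩; omega
    have h2 : (v ⟨0, hn⟩).natAbs ≤ gnorm v :=
      Finset.le_sup (f := fun i => (v i).natAbs) (Finset.mem_univ _)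
    rw [hKdef]; exact_mod_cast le_trans h1 h2
  have hKi : ∀ i, |v i| ≤ K := by
    intro i
    have h2 : (v i).natAbs ≤ gnorm v :=
      Finset.le_sup (f := fun i => (v i).natAbs) (Finset.mem_univ _)
    rw [Int.abs_eq_natAbs, hKdef]
    exact_mod_cast h2
  set M : ℤ := Δ / (2 * K) with hM
  have hM0 : 0 ≤ M := Int.ediv_nonneg (by linarith) (by linarith)
  have hdm := Int.mul_ediv_add_emod Δ (2 * K)
  have hmod0 := Int.emod_nonneg Δ (show 2 * K ≠ 0 by intro h; omega)
  have hmodlt := Int.emod_lt_of_pos Δ (show 0 < 2 * K by linarith)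
  rw [← hM] at hdm
  have hMK : 2 * M * K ≤ Δ := by linarith
  have h1n : (1:ℤ) ≤ 2 ^ n := one_le_pow₀ one_le_two
  have hMbig : 2 ^ (n + 1) * (δ + 1) < 2 * (M + 1) := by
    have hlt : 2 ^ (n + 1) * (δ + 1) * K < (2 * (M + 1)) * K := by linarith
    exact lt_of_mul_lt_mul_right hlt (by linarith)
  have hcnt : 2 ^ n * (2 * δ) < 2 * M + 1 := by
    rw [pow_succ] at hMbig
    linarith
  -- the points on the line
  set z : ℤ → (FreePart n : Set (Space n)) :=
    fun a => ⟨shift (a • v) (x : Space n), shift_mem_freePart x.2⟩ with hz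
  have hmem : ∀ a a' : ℤ, E (z a) (z a') ↔
      ∀ i, A (z a) i ≤ (a' - a) * v i ∧ (a' - a) * v i ≤ B (z a) i := by
    intro a a'
    rw [hiff (z a) (z a')]
    constructor
    · rintro ⟨g, hg, hsh⟩
      have hsh' : shift (a • v + g) (x : Space n) = shift (a' • v) (x : Space n) := by
        rw [← shift_shift]; exact hsh
      have hg' : a • v + g = a' • v := free_shift_inj x.2 hsh'
      intro i
      have hgi : a * v i + g i = a' * v i := by
        have := congrFun hg' i
        simpa [Pi.smul_apply, smul_eq_mul] using this
      have h1 := hg i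
      constructor <;> linarith [h1.1, h1.2]
    · intro h
      refine ⟨(a' - a) • v, fun i => ?_, ?_⟩
      · simpa [Pi.smul_apply, smul_eq_mul] using h i
      · rw [shift_shift, ← add_smul]
        exact congrArg (fun c : ℤ => shift (c • v) (x : Space n)) (add_sub_cancel a a')
  have hconv : ∀ a b c : ℤ, a ≤ b → b ≤ c → E (z a) (z c) → E (z a) (z b) := by
    intro a b c hab hbc hac
    rw [hmem] at hac ⊢
    intro i
    obtain ⟨h1, h2⟩ := hac i
    obtain ⟨h3, h4⟩ := hA0 (z a) i
    rcases le_or_gt 0 (v i) with hvi | hvi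
    · constructor
      · have := mul_nonneg (show (0:ℤ) ≤ b - a by linarith) hvi
        linarith
      · have := mul_le_mul_of_nonneg_right (show b - a ≤ c - a by linarith) hvi
        linarith
    · constructor
      · have := mul_le_mul_of_nonpos_right (show b - a ≤ c - a by linarith) hvi.le
        linarith
      · have := mul_le_mul_of_nonpos_right (show (0:ℤ) ≤ b - a by linarith) hvi.le
        simp only [zero_mul] at this
        linarith
  have hsideΔ : ∀ w i, Δ ≤ B w i - A w i := by
    intro w i
    rcases hside w i with h | h <;> omega
  -- the bit map
  set bit : ℤ → Fin n → Bool :=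
    fun a i => decide (A (z a) i + a * v i ≤ -(M * |v i|)) with hbit_def
  have core : ∀ b c : ℤ, b ∈ Finset.Icc (-M) M → c ∈ Finset.Icc (-M) M →
      bit b = bit c → ∀ i, A (z c) i + c * v i ≤ B (z b) i + b * v i := by
    intro b c hb hc hbiteq i
    have hvK := hKi i
    have hvabs : 0 ≤ |v i| := abs_nonneg _
    obtain ⟨hb1, hb2⟩ := Finset.mem_Icc.mp hb
    obtain ⟨hc1, hc2⟩ := Finset.mem_Icc.mp hc
    have hbm : |b * v i| ≤ M * |v i| := by
      rw [abs_mul]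
      exact mul_le_mul_of_nonneg_right (abs_le.mpr ⟨hb1, hb2⟩) hvabs
    have hcm : |c * v i| ≤ M * |v i| := by
      rw [abs_mul]
      exact mul_le_mul_of_nonneg_right (abs_le.mpr ⟨hc1, hc2⟩) hvabs
    rw [abs_le] at hbm hcm
    have hbi : (A (z b) i + b * v i ≤ -(M * |v i|)) ↔
        (A (z c) i + c * v i ≤ -(M * |v i|)) := by
      have := congrFun hbiteq i
      simpa [hbit_def] using this
    have hDb := hsideΔ (z b) i
    obtain ⟨hAb, hBb⟩ := hA0 (z b) i
    obtain ⟨hAc, hBc⟩ := hA0 (z c) i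
    have h2m : 2 * (M * |v i|) ≤ Δ := by
      have := mul_le_mul_of_nonneg_left hvK hM0
      linarith
    by_cases h : A (z b) i + b * v i ≤ -(M * |v i|)
    · have h' := hbi.mp h
      linarith [hbm.1, hbm.2]
    · have h' : ¬ (A (z c) i + c * v i ≤ -(M * |v i|)) := fun hh => h (hbi.mpr hh)
      push_neg at h h'
      linarith [hcm.1, hcm.2]
  have hfiber : ∀ a a' : ℤ, a ∈ Finset.Icc (-M) M → a' ∈ Finset.Icc (-M) M →
      bit a = bit a' → E (z a) (z a') := by
    intro a a' ha ha' hbiteq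
    set w : Fin n → ℤ := fun i => max (A (z a) i + a * v i) (A (z a') i + a' * v i) with hw
    have hy0 : shift w (x : Space n) ∈ FreePart n := shift_mem_freePart x.2
    have hE : ∀ b : ℤ, (∀ i, A (z b) i + b * v i ≤ w i ∧ w i ≤ B (z b) i + b * v i) →
        E (z b) ⟨shift w (x : Space n), hy0⟩ := by
      intro b hb
      rw [hiff]
      refine ⟨w - b • v, fun i => ?_, ?_⟩
      · obtain ⟨h1, h2⟩ := hb i
        constructor <;> simp [Pi.sub_apply, Pi.smul_apply, smul_eq_mul] <;> linarith
      · have hwe : b • v + (w - b • v) = w := by abel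
        rw [shift_shift, hwe]
    have h1 : E (z a) ⟨shift w (x : Space n), hy0⟩ := by
      refine hE a (fun i => ⟨le_max_left _ _, max_le ?_ ?_⟩)
      · obtain ⟨hAb, hBb⟩ := hA0 (z a) i
        linarith
      · exact core a a' ha ha' hbiteq i
    have h2 : E (z a') ⟨shift w (x : Space n), hy0⟩ := by
      refine hE a' (fun i => ⟨le_max_right _ _, max_le ?_ ?_⟩)
      · exact core a' a ha' ha hbiteq.symm i
      · obtain ⟨hAb, hBb⟩ := hA0 (z a') i
        linarith
    exact hEquiv.trans h1 (hEquiv.symm h2)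
  -- pigeonhole
  have hTcard : ((Finset.Icc (-M) M).card : ℤ) = 2 * M + 1 := by
    rw [Int.card_Icc]
    rw [Int.toNat_of_nonneg (by linarith)]
    ring
  have hlt : (Finset.univ : Finset (Fin n → Bool)).card * (2 * δ).toNat <
      (Finset.Icc (-M) M).card := by
    have hcu : (Finset.univ : Finset (Fin n → Bool)).card = 2 ^ n := by
      simp [Finset.card_univ]
    rw [hcu]
    have : ((2 ^ n * (2 * δ).toNat : ℕ) : ℤ) < ((Finset.Icc (-M) M).card : ℤ) := by
      rw [hTcard]
      push_cast
      rw [Int.toNat_of_nonneg (by linarith)]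
      exact hcnt
    exact_mod_cast this
  obtain ⟨y, -, hy⟩ := Finset.exists_lt_card_fiber_of_mul_lt_card_of_maps_to
    (fun a _ => Finset.mem_univ (bit a)) hlt
  set S := (Finset.Icc (-M) M).filter (fun a => bit a = y) with hS
  have hSne : S.Nonempty := Finset.card_pos.mp (by omega)
  set s := S.min' hSne with hsdef
  set t := S.max' hSne with htdef
  have hsub : S ⊆ Finset.Icc s t := fun a ha => Finset.mem_Icc.mpr ⟨S.min'_le a ha, S.le_max' a ha⟩
  have hcard2 : S.card ≤ (Finset.Icc s t).card := Finset.card_le_card hsub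
  rw [Int.card_Icc] at hcard2
  have hts : 2 * δ ≤ t - s := by omega
  obtain ⟨hsT, hbs⟩ : s ∈ Finset.Icc (-M) M ∧ bit s = y :=
    Finset.mem_filter.mp (S.min'_mem hSne)
  obtain ⟨htT, hbt⟩ : t ∈ Finset.Icc (-M) M ∧ bit t = y :=
    Finset.mem_filter.mp (S.max'_mem hSne)
  have hst' : E (z s) (z t) := hfiber s t hsT htT (hbs.trans hbt.symm)
  set a0 := s + δ with ha0def
  have hEsa0 : E (z s) (z a0) := hconv s a0 t (by linarith) (by linarith) hst'
  have hEa0s : E (z a0) (z s) := hEquiv.symm hEsa0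
  have hEa0t : E (z a0) (z t) := hEquiv.trans hEa0s hst'
  have hdeep : ∀ i, A (z a0) i ≤ -δ ∧ δ ≤ B (z a0) i := by
    intro i
    have h1 := (hmem a0 s).mp hEa0s i
    have h2 := (hmem a0 t).mp hEa0t i
    have hs0 : s - a0 = -δ := by rw [ha0def]; ring
    rw [hs0] at h1
    have htd : δ ≤ t - a0 := by omega
    rcases (hv i).lt_or_gt with hvi | hvi
    · have hv1 : v i ≤ -1 := by omega
      constructor
      · have := mul_le_mul_of_nonneg_left hv1 (show (0:ℤ) ≤ t - a0 by linarith)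
        linarith [h2.1]
      · have := mul_le_mul_of_nonpos_left hv1 (show -δ ≤ (0:ℤ) by linarith)
        linarith [h1.2]
    · have hv1 : 1 ≤ v i := by omega
      constructor
      · have := mul_le_mul_of_nonpos_left hv1 (show -δ ≤ (0:ℤ) by linarith)
        linarith [h1.1]
      · have := mul_le_mul htd hv1 (by norm_num) (by linarith)
        linarith [h2.2]
  obtain ⟨hsT1, hsT2⟩ := Finset.mem_Icc.mp hsT
  obtain ⟨htT1, htT2⟩ := Finset.mem_Icc.mp htT
  refine ⟨a0, ?_, ?_⟩
  · have ha0abs : |a0| ≤ M := abs_le.mpr ⟨by omega, by omega⟩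
    have := mul_le_mul_of_nonneg_left hK1 (show (0:ℤ) ≤ 2 * M by linarith)
    linarith
  · intro g hg
    have hmemg : g ∈ genRect (A (z a0)) (B (z a0)) := by
      intro i
      have hgi : |g i| ≤ δ := by
        have h2 : (g i).natAbs ≤ gnorm g :=
          Finset.le_sup (f := fun i => (g i).natAbs) (Finset.mem_univ _)
        rw [Int.abs_eq_natAbs]
        calc ((g i).natAbs : ℤ) ≤ (gnorm g : ℤ) := by exact_mod_cast h2
          _ ≤ δ := hg
      obtain ⟨hd1, hd2⟩ := hdeep i
      rw [abs_le] at hgi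
      constructor <;> linarith
    exact (hiff (z a0) _).mpr ⟨g, hmemg, rfl⟩
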